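/- Let f, g be negative real numbers and ρ a real number with ρ ∉ {0, 1/2}. Then: (a) the quadratic equation (g²/(2ρ−1)²)·t² + (f² + 2fg²)·t + 2f³ = 0 has exactly one positive real root t₊ (and it is a simple root); and (b) for every ω > 0, the polynomial ρx² − γ(ω)x + (1−ρ) has a root of absolute value 1 (i.e. a root of the form e^{iθ} with θ real) if and only if ω² = t₊. In particular there is a unique ω₊ > 0 (namely ω₊ = √t₊) at which the quadratic has a unimodular root. -/

import Mathlib

/-- `γ(ω) = (f + iωg + ω²)/(f + iωg)`. -/
noncomputable def gam (f g ω : ℝ) : ℂ :=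
  ((f : ℂ) + Complex.I * ω * g + (ω : ℂ) ^ 2) / ((f : ℂ) + Complex.I * ω * g)

lemma gam_eq (f g ω : ℝ) (hf : f ≠ 0) :
    gam f g ω = ((1 + ω^2*f/(f^2+ω^2*g^2) : ℝ) : ℂ) + ((-(ω^3*g)/(f^2+ω^2*g^2) : ℝ) : ℂ) * Complex.I := by
  have hD0 : (f^2+ω^2*g^2 : ℝ) ≠ 0 := by positivity
  have hDC : ((f:ℂ)^2+(ω:ℂ)^2*(g:ℂ)^2) ≠ 0 := by exact_mod_cast Complex.ofReal_ne_zero.mpr hD0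
  have hdne : (f:ℂ) + Complex.I*ω*g ≠ 0 := by
    intro h
    have h2 : ((f:ℂ) + Complex.I*ω*g).re = 0 := by rw [h]; simp
    simp [Complex.add_re, Complex.mul_re, Complex.mul_im] at h2
    exact hf h2
  apply mul_right_cancel₀ hdne
  rw [gam, div_mul_cancel₀ _ hdne]
  push_cast
  field_simp
  linear_combination ((ω:ℂ)^4*(g:ℂ)^2) * Complex.I_sq

lemma part_fwd (f g ρ ω : ℝ) (hf0 : f ≠ 0) (h2ρ : 2*ρ-1 ≠ 0) (hω : 0 < ω) (hg0 : g ≠ 0)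
    (z : ℂ) (habs : ‖z‖ = 1)
    (heq : (ρ : ℂ) * z ^ 2 - gam f g ω * z + (1 - (ρ : ℂ)) = 0) :
    (g^2/(2*ρ-1)^2) * (ω^2)^2 + (f^2+2*f*g^2)*(ω^2) + 2*f^3 = 0 := by
  have hD0 : (f^2+ω^2*g^2 : ℝ) ≠ 0 := by positivity
  have hnsq : z * (starRingEnd ℂ) z = 1 := by
    rw [Complex.mul_conj, Complex.normSq_eq_norm_sq, habs]; norm_num
  have h1 : gam f g ω * z = (ρ:ℂ)*z^2 + (1-(ρ:ℂ)) := by linear_combination -heq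
  have hγ : gam f g ω = (ρ:ℂ)*z + (1-(ρ:ℂ))*(starRingEnd ℂ) z := by
    linear_combination (starRingEnd ℂ z) * h1 - (gam f g ω - (ρ:ℂ)*z) * hnsq
  rw [gam_eq f g ω hf0] at hγ
  have hre := congrArg Complex.re hγ
  have him := congrArg Complex.im hγ
  simp only [Complex.add_re, Complex.add_im, Complex.mul_re, Complex.mul_im,
    Complex.ofReal_re, Complex.ofReal_im, Complex.I_re, Complex.I_im, Complex.conj_re,
    Complex.conj_im, Complex.sub_re, Complex.sub_im, Complex.one_re, Complex.one_im,
    mul_zero, zero_mul, sub_zero, zero_sub, add_zero, zero_add, mul_one] at hre him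
  have hxy : z.re^2 + z.im^2 = 1 := by
    have h := Complex.normSq_eq_norm_sq z
    rw [habs] at h
    simp [Complex.normSq_apply] at h
    nlinarith [h]
  field_simp at hre him
  have key2 : (g^2*ω^4 + ((f^2+2*f*g^2)*ω^2 + 2*f^3)*(2*ρ-1)^2) * ω^2 = 0 := by
    linear_combination ((2*ρ-1)^2*(f^2+ω^2*g^2)^2) * hxy
      + ((2*ρ-1)^2*(z.re*(f^2+ω^2*g^2) + (f^2+ω^2*g^2) + ω^2*f)) * hre
      + (((2*ρ-1)*z.im*(f^2+ω^2*g^2) - ω^3*g)) * him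
  have key : g^2*ω^4 + ((f^2+2*f*g^2)*ω^2 + 2*f^3)*(2*ρ-1)^2 = 0 := by
    rcases mul_eq_zero.mp key2 with h | h
    · exact h
    · exact absurd h (by positivity)
  field_simp
  linear_combination key

lemma part_bwd (f g ρ ω : ℝ) (hf0 : f ≠ 0) (h2ρ : 2*ρ-1 ≠ 0) (hω : 0 < ω) (hg0 : g ≠ 0)
    (hP : g^2/(2*ρ-1)^2 * (ω^2)^2 + (f^2+2*f*g^2)*(ω^2) + 2*f^3 = 0) :
    ∃ z : ℂ, ‖z‖ = 1 ∧ (ρ : ℂ) * z ^ 2 - gam f g ω * z + (1 - (ρ : ℂ)) = 0 := by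
  have hD0 : (f^2+ω^2*g^2 : ℝ) ≠ 0 := by positivity
  set x : ℝ := 1 + ω^2*f/(f^2+ω^2*g^2) with hx_def
  set y : ℝ := -(ω^3*g)/((f^2+ω^2*g^2)*(2*ρ-1)) with hy_def
  have hP' : g^2*ω^4 + ((f^2+2*f*g^2)*ω^2 + 2*f^3)*(2*ρ-1)^2 = 0 := by
    field_simp at hP
    linear_combination hP
  have hxy : x^2 + y^2 = 1 := by
    rw [hx_def, hy_def]
    field_simp
    linear_combination (ω^2) * hP'
  refine ⟨(x:ℂ) + (y:ℂ)*Complex.I, ?_, ?_⟩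
  · rw [Complex.norm_def, Complex.normSq_add_mul_I, hxy, Real.sqrt_one]
  · have hb : (-(ω^3*g)/(f^2+ω^2*g^2) : ℝ) = (2*ρ-1)*y := by rw [hy_def]; field_simp
    rw [gam_eq f g ω hf0, hb]
    have hxyC : (x:ℂ)^2 + (y:ℂ)^2 = 1 := by exact_mod_cast hxy
    have hxC : (x:ℂ) = 1 + (ω:ℂ)^2*(f:ℂ)/((f:ℂ)^2+(ω:ℂ)^2*(g:ℂ)^2) := by
      rw [hx_def]; push_cast; ring
    push_cast
    linear_combination ((ρ:ℂ)-1)*hxyC + (1-(ρ:ℂ))*(y:ℂ)^2*Complex.I_sq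
      + ((x:ℂ)+(y:ℂ)*Complex.I)*hxC

theorem stmt_18 (f g : ℝ) (hf : f < 0) (hg : g < 0) (ρ : ℝ)
    (hρ0 : ρ ≠ 0) (hρhalf : ρ ≠ 1 / 2) :
    ∃ t : ℝ, 0 < t ∧
      (g ^ 2 / (2 * ρ - 1) ^ 2) * t ^ 2 + (f ^ 2 + 2 * f * g ^ 2) * t + 2 * f ^ 3 = 0 ∧
      2 * (g ^ 2 / (2 * ρ - 1) ^ 2) * t + (f ^ 2 + 2 * f * g ^ 2) ≠ 0 ∧
      (∀ t' : ℝ, 0 < t' →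
        (g ^ 2 / (2 * ρ - 1) ^ 2) * t' ^ 2 + (f ^ 2 + 2 * f * g ^ 2) * t' + 2 * f ^ 3 = 0 →
        t' = t) ∧
      (∀ ω : ℝ, 0 < ω →
        ((∃ z : ℂ, ‖z‖ = 1 ∧
            (ρ : ℂ) * z ^ 2 - gam f g ω * z + (1 - (ρ : ℂ)) = 0) ↔ ω ^ 2 = t)) := by
  have h2ρ : (2*ρ-1) ≠ 0 := by
    intro h; apply hρhalf; linarith
  have hg0 : g ≠ 0 := ne_of_lt hg
  have hf0 : f ≠ 0 := ne_of_lt hf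
  set A : ℝ := g^2/(2*ρ-1)^2 with hA_def
  have hA : 0 < A := by rw [hA_def]; positivity
  set B : ℝ := f^2 + 2*f*g^2 with hB_def
  set C : ℝ := 2*f^3 with hC_def
  have hC : C < 0 := by
    have h3 : f^3 < 0 := Odd.pow_neg ⟨1, by norm_num⟩ hf
    rw [hC_def]; linarith
  have hdisc : 0 < B^2 - 4*A*C := by nlinarith
  set s : ℝ := Real.sqrt (B^2 - 4*A*C) with hs_def
  have hs2 : s^2 = B^2-4*A*C := Real.sq_sqrt hdisc.le
  have hs0 : 0 ≤ s := Real.sqrt_nonneg _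
  have hspos : 0 < s := Real.sqrt_pos.mpr hdisc
  have hsB2 : B^2 < s^2 := by
    nlinarith [mul_pos hA (show 0 < -C by linarith)]
  have hsB : B < s := by nlinarith [hsB2, hs0]
  set t : ℝ := (-B+s)/(2*A) with ht_def
  have ht : 0 < t := div_pos (by linarith) (by linarith)
  have hroot : A * t^2 + B * t + C = 0 := by
    rw [ht_def]; field_simp; nlinarith [hs2]
  have huniq : ∀ t' : ℝ, 0 < t' → A * t'^2 + B * t' + C = 0 → t' = t := by
    intro t' ht' hroot'
    by_contra hne
    have hfac : (t' - t) * (A*(t'+t) + B) = 0 := by linear_combination hroot' - hroot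
    have h2 : A*(t'+t) + B = 0 := by
      rcases mul_eq_zero.mp hfac with h | h
      · exact absurd (by linarith : t' = t) hne
      · exact h
    have hCpos : C = A * t * t' := by linear_combination hroot' - t' * h2
    nlinarith [mul_pos (mul_pos hA ht) ht']
  have hsimple : 2 * A * t + B ≠ 0 := by
    have h2At : 2 * A * t + B = s := by rw [ht_def]; field_simp; ring
    rw [h2At]; exact hspos.ne'
  refine ⟨t, ht, by linear_combination hroot, hsimple, huniq, ?_⟩
  intro ω hω
  constructor
  · rintro ⟨z, habs, heq⟩
    exact huniq (ω^2) (by positivity) (part_fwd f g ρ ω hf0 h2ρ hω hg0 z habs heq)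
  · intro hω2
    have hP : A * (ω^2)^2 + B * (ω^2) + C = 0 := by rw [hω2]; exact hroot
    exact part_bwd f g ρ ω hf0 h2ρ hω hg0 (by rw [hA_def, hB_def, hC_def] at hP; linarith)
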